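/- If J₁, J₂ ∈ T (both induce two-block factorizations of X as above), then J = J₁ ∩ J₂ together with its complement induces a factorization of X: with Z₁ = P_J(X) and Z₂ = P_{Jᶜ}(X), one has X = {x ∈ ℝⁿ : P_J(x) ∈ Z₁, P_{Jᶜ}(x) ∈ Z₂}. -/
import Mathlib

/-- `J` together with its complement induces a factorization of `X`:
`X = {x : P_J(x) ∈ P_J(X), P_{Jᶜ}(x) ∈ P_{Jᶜ}(X)}`. -/
def Factorizes (n : ℕ) (X : Set (Fin n → ℝ)) (J : Set (Fin n)) : Prop :=
  X = {x | (∃ y ∈ X, ∀ i ∈ J, x i = y i) ∧ (∃ y ∈ X, ∀ i ∉ J, x i = y i)}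

/-- if `J₁` and `J₂` both induce two-block factorizations of `X`, then so
does `J = J₁ ∩ J₂`: with `Z₁ = P_J(X)`, `Z₂ = P_{Jᶜ}(X)` one has
`X = {x : P_J(x) ∈ Z₁, P_{Jᶜ}(x) ∈ Z₂}`. -/
theorem factorizes_inter (n : ℕ) (X : Set (Fin n → ℝ)) (J₁ J₂ : Set (Fin n))
    (h₁ : Factorizes n X J₁) (h₂ : Factorizes n X J₂) :
    X = {x | (∃ y ∈ X, ∀ i ∈ J₁ ∩ J₂, x i = y i) ∧
             (∃ y ∈ X, ∀ i ∉ J₁ ∩ J₂, x i = y i)} := by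
  classical
  ext x
  constructor
  · intro hx
    exact ⟨⟨x, hx, fun i _ => rfl⟩, ⟨x, hx, fun i _ => rfl⟩⟩
  · rintro ⟨⟨y₁, hy₁, hy₁x⟩, ⟨y₂, hy₂, hy₂x⟩⟩
    have mix : ∀ (J : Set (Fin n)), Factorizes n X J → ∀ y ∈ X, ∀ z ∈ X,
        (fun i => if i ∈ J then y i else z i) ∈ X := by
      intro J hJ y hy z hz
      rw [hJ]
      exact ⟨⟨y, hy, fun i hi => if_pos hi⟩, ⟨z, hz, fun i hi => if_neg hi⟩⟩
    have hwX := mix J₁ h₁ y₁ hy₁ y₂ hy₂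
    have hzX := mix J₂ h₂ _ hwX y₂ hy₂
    have hx : x = fun i => if i ∈ J₂ then (if i ∈ J₁ then y₁ i else y₂ i) else y₂ i := by
      funext i
      by_cases h2 : i ∈ J₂
      · by_cases h1 : i ∈ J₁
        · simp only [if_pos h1, if_pos h2]
          exact hy₁x i ⟨h1, h2⟩
        · simp only [if_pos h2, if_neg h1]
          exact hy₂x i (fun hc => h1 hc.1)
      · simp only [if_neg h2]
        exact hy₂x i (fun hc => h2 hc.2)
    rw [hx]
    exact hzX
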